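/- arXiv:2411.04767 — 3 statements merged into one kernel-verified Lean document; each statement's English description precedes it below -/
import Mathlib

section
/- Holevo–Helstrom theorem (inequality part): Let ρ₀, ρ₁ be density matrices on ℂ^d, let λ ∈ [0,1], and let μ₀, μ₁ be positive semidefinite d×d complex matrices with μ₀ + μ₁ = I (a binary measurement). Then λ·Tr(μ₀ρ₀) + (1−λ)·Tr(μ₁ρ₁) ≤ 1/2 + (1/2)·‖λρ₀ − (1−λ)ρ₁‖₁ (the traces appearing here are real numbers). -/
open Matrix BigOperators
open scoped ComplexOrder

open Classical in
noncomputable def msqrt {n : Type*} [Fintype n] [DecidableEq n] (A : Matrix n n ℂ) :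
    Matrix n n ℂ :=
  if h : A.PosSemidef then
    (h.1.eigenvectorUnitary : Matrix n n ℂ) * diagonal ((↑) ∘ (√·) ∘ h.1.eigenvalues) *
      (star h.1.eigenvectorUnitary : Matrix n n ℂ)
  else 0

noncomputable def traceNorm {n : Type*} [Fintype n] [DecidableEq n] (A : Matrix n n ℂ) : ℝ :=
  (msqrt (Aᴴ * A)).trace.re

noncomputable def fidelity {n : Type*} [Fintype n] [DecidableEq n] (ρ₀ ρ₁ : Matrix n n ℂ) : ℝ :=
  ((msqrt (msqrt ρ₀ * ρ₁ * msqrt ρ₀)).trace.re) ^ 2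

noncomputable def tensorPow {d : ℕ} (ρ : Matrix (Fin d) (Fin d) ℂ) (n : ℕ) :
    Matrix (Fin n → Fin d) (Fin n → Fin d) ℂ :=
  Matrix.of fun i j => ∏ k, ρ (i k) (j k)

section aux
open scoped MatrixOrder
variable {n : Type*} [Fintype n] [DecidableEq n]

lemma traceNorm_herm (A : Matrix n n ℂ) (hA : A.IsHermitian) :
    traceNorm A = ∑ i, |hA.eigenvalues i| := by
  set U : Matrix n n ℂ := (hA.eigenvectorUnitary : Matrix n n ℂ) with hUdef
  have hU' : star U * U = 1 := Matrix.mem_unitaryGroup_iff'.mp hA.eigenvectorUnitary.2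
  set M : Matrix n n ℂ := U * Matrix.diagonal (fun i => ((|hA.eigenvalues i| : ℝ) : ℂ)) * star U
    with hMdef
  have hM : M.PosSemidef := by
    rw [hMdef, Matrix.star_eq_conjTranspose]
    refine Matrix.PosSemidef.mul_mul_conjTranspose_same ?_ U
    refine Matrix.posSemidef_diagonal_iff.mpr fun i => ?_
    exact_mod_cast abs_nonneg _
  have hAA : (Aᴴ * A).PosSemidef := Matrix.posSemidef_conjTranspose_mul_self A
  have hcancel : ∀ X : Matrix n n ℂ, star U * (U * X) = X := fun X => by
    rw [← Matrix.mul_assoc, hU', Matrix.one_mul]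
  have hsq : M ^ 2 = Aᴴ * A := by
    rw [hA.eq, pow_two, hMdef]
    conv_rhs => rw [hA.spectral_theorem, Unitary.conjStarAlgAut_apply, ← hUdef]
    simp only [Matrix.mul_assoc, hcancel]
    congr 1
    rw [← Matrix.mul_assoc, ← Matrix.mul_assoc, Matrix.diagonal_mul_diagonal,
      Matrix.diagonal_mul_diagonal]
    have habs : (fun i => ((|hA.eigenvalues i| : ℝ) : ℂ) * ((|hA.eigenvalues i| : ℝ) : ℂ))
        = fun i => (Complex.ofReal ∘ hA.eigenvalues) i * (Complex.ofReal ∘ hA.eigenvalues) i := by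
      funext i
      simp only [Function.comp_apply, ← Complex.ofReal_mul]
      rw [← sq, ← sq, sq_abs]
    rw [habs]; rfl
  have hmsqrt : msqrt (Aᴴ * A) = M := by
    rw [msqrt, dif_pos hAA]
    have h1 : CFC.sqrt (Aᴴ * A) = M := CFC.sqrt_unique (by rw [← sq]; exact hsq) hM.nonneg
    rw [CFC.sqrt_eq_real_sqrt _ hAA.nonneg, cfcₙ_eq_cfc, hAA.1.cfc_eq, IsHermitian.cfc,
      Unitary.conjStarAlgAut_apply] at h1
    rw [← h1]; rfl
  rw [traceNorm, hmsqrt, hMdef, Matrix.trace_mul_cycle, hU', Matrix.one_mul,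
    Matrix.trace_diagonal]
  push_cast
  simp

lemma trace_diag_herm (A : Matrix n n ℂ) (hA : A.IsHermitian) :
    A.trace.re = ∑ i, hA.eigenvalues i := by
  have hU' : star (hA.eigenvectorUnitary : Matrix n n ℂ) * hA.eigenvectorUnitary = 1 :=
    Matrix.mem_unitaryGroup_iff'.mp hA.eigenvectorUnitary.2
  conv_lhs => rw [hA.spectral_theorem, Unitary.conjStarAlgAut_apply]
  rw [Matrix.trace_mul_cycle, hU', Matrix.one_mul, Matrix.trace_diagonal]
  push_cast
  simp

lemma trace_mul_le (Δ μ ν : Matrix n n ℂ) (hΔ : Δ.IsHermitian) (hμ : μ.PosSemidef)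
    (hν : ν.PosSemidef) (hsum : μ + ν = 1) :
    ((μ * Δ).trace).re ≤ (Δ.trace.re + traceNorm Δ) / 2 := by
  set U : Matrix n n ℂ := (hΔ.eigenvectorUnitary : Matrix n n ℂ) with hUdef
  have hU' : star U * U = 1 := Matrix.mem_unitaryGroup_iff'.mp hΔ.eigenvectorUnitary.2
  set lam := hΔ.eigenvalues with hlam
  set N : Matrix n n ℂ := star U * μ * U with hNdef
  set N' : Matrix n n ℂ := star U * ν * U with hN'def
  have hN : N.PosSemidef := by
    rw [hNdef, Matrix.star_eq_conjTranspose]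
    exact hμ.conjTranspose_mul_mul_same U
  have hN' : N'.PosSemidef := by
    rw [hN'def, Matrix.star_eq_conjTranspose]
    exact hν.conjTranspose_mul_mul_same U
  have hNsum : N + N' = 1 := by
    rw [hNdef, hN'def, ← Matrix.add_mul, ← Matrix.mul_add, hsum, Matrix.mul_one, hU']
  have hc0 : ∀ i, 0 ≤ (N i i).re := by
    intro i
    have := hN.re_dotProduct_nonneg (Pi.single i 1)
    simpa [dotProduct, Matrix.mulVec, Pi.single_apply, Finset.sum_ite_eq,
      Finset.mul_sum] using this
  have hc1 : ∀ i, (N i i).re ≤ 1 := by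
    intro i
    have h0' : 0 ≤ (N' i i).re := by
      have := hN'.re_dotProduct_nonneg (Pi.single i 1)
      simpa [dotProduct, Matrix.mulVec, Pi.single_apply, Finset.sum_ite_eq,
        Finset.mul_sum] using this
    have h := congrArg (fun (X : Matrix n n ℂ) => (X i i).re) hNsum
    simp only [Matrix.add_apply, Complex.add_re, Matrix.one_apply_eq, Complex.one_re] at h
    linarith
  have htr : (μ * Δ).trace = ∑ i, N i i * (lam i : ℂ) := by
    conv_lhs => rw [hΔ.spectral_theorem, Unitary.conjStarAlgAut_apply, ← hUdef]
    rw [← Matrix.mul_assoc, ← Matrix.mul_assoc, Matrix.trace_mul_comm,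
      ← Matrix.mul_assoc, ← Matrix.mul_assoc, ← hNdef]
    simp [Matrix.trace, Matrix.diag, Matrix.mul_diagonal, ← hlam]
  have htrre : ((μ * Δ).trace).re = ∑ i, (N i i).re * lam i := by
    rw [htr, Complex.re_sum]
    refine Finset.sum_congr rfl fun i _ => ?_
    simp [Complex.mul_re]
  rw [htrre, trace_diag_herm Δ hΔ, traceNorm_herm Δ hΔ, ← hlam]
  rw [← Finset.sum_add_distrib, Finset.sum_div]
  refine Finset.sum_le_sum fun i _ => ?_
  rcases le_or_gt 0 (lam i) with h | h
  · rw [abs_of_nonneg h]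
    nlinarith [hc0 i, hc1 i]
  · rw [abs_of_neg h]
    nlinarith [hc0 i, hc1 i]

end aux

/-- Holevo–Helstrom theorem (inequality part). -/
theorem holevo_helstrom_inequality {d : ℕ} (ρ₀ ρ₁ μ₀ μ₁ : Matrix (Fin d) (Fin d) ℂ)
    (hρ₀ : ρ₀.PosSemidef) (hρ₀t : ρ₀.trace = 1)
    (hρ₁ : ρ₁.PosSemidef) (hρ₁t : ρ₁.trace = 1)
    (hμ₀ : μ₀.PosSemidef) (hμ₁ : μ₁.PosSemidef) (hμ : μ₀ + μ₁ = 1)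
    (l : ℝ) (hl0 : 0 ≤ l) (hl1 : l ≤ 1) :
    l * ((μ₀ * ρ₀).trace).re + (1 - l) * ((μ₁ * ρ₁).trace).re ≤
      1 / 2 + (1 / 2) * traceNorm ((l : ℂ) • ρ₀ - ((1 - l : ℝ) : ℂ) • ρ₁) := by
  set Δ : Matrix (Fin d) (Fin d) ℂ := (l : ℂ) • ρ₀ - ((1 - l : ℝ) : ℂ) • ρ₁ with hΔdef
  have hΔ : Δ.IsHermitian := by
    rw [hΔdef, Matrix.IsHermitian, Matrix.conjTranspose_sub, Matrix.conjTranspose_smul,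
      Matrix.conjTranspose_smul, hρ₀.1.eq, hρ₁.1.eq]
    simp [Complex.conj_ofReal]
  have key := trace_mul_le Δ μ₀ μ₁ hΔ hμ₀ hμ₁ hμ
  -- trace of Δ
  have hΔt : Δ.trace.re = 2 * l - 1 := by
    rw [hΔdef, Matrix.trace_sub, Matrix.trace_smul, Matrix.trace_smul, hρ₀t, hρ₁t]
    simp [Complex.sub_re, Complex.ofReal_re]
    ring
  -- expand μ₀ * Δ
  have hsplit : ((μ₀ * Δ).trace).re
      = l * ((μ₀ * ρ₀).trace).re - (1 - l) * ((μ₀ * ρ₁).trace).re := by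
    rw [hΔdef, Matrix.mul_sub, Matrix.mul_smul, Matrix.mul_smul, Matrix.trace_sub,
      Matrix.trace_smul, Matrix.trace_smul]
    simp [Complex.sub_re, Complex.smul_re]
  have hμ₁eq : μ₁ = 1 - μ₀ := by rw [← hμ]; abel
  have hb : ((μ₁ * ρ₁).trace).re = 1 - ((μ₀ * ρ₁).trace).re := by
    rw [hμ₁eq, Matrix.sub_mul, Matrix.one_mul, Matrix.trace_sub, hρ₁t]
    simp [Complex.sub_re]
  rw [hb]
  rw [hsplit, hΔt] at key
  linarith
end

section
/- Concavity lemma (paper's Appendix): For every real number a with 0 < a < 1, the function f_a : [0, ∞) → ℝ defined by f_a(x) = √(1 − a^x) is concave on [0, ∞). -/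
/-- Concavity of `x ↦ √(1 - a^x)` on `[0, ∞)` for `0 < a < 1`. -/
theorem concaveOn_sqrt_one_sub_rpow (a : ℝ) (ha0 : 0 < a) (ha1 : a < 1) :
    ConcaveOn ℝ (Set.Ici (0 : ℝ)) (fun x : ℝ => Real.sqrt (1 - a ^ x)) := by
  set g : ℝ → ℝ := fun x => 1 - a ^ x with hg
  have hgconc : ConcaveOn ℝ (Set.Ici (0 : ℝ)) g := by
    have hconv : ConvexOn ℝ (Set.Ici (0 : ℝ)) (fun x : ℝ => a ^ x) := by
      have huniv : ConvexOn ℝ Set.univ (fun x : ℝ => Real.exp (Real.log a * x)) := by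
        have := convexOn_exp.comp_affineMap
          (LinearMap.toAffineMap (LinearMap.smulRight (LinearMap.id : ℝ →ₗ[ℝ] ℝ) (Real.log a)))
        simpa [Function.comp_def, mul_comm] using this
      have heq : ∀ x : ℝ, a ^ x = Real.exp (Real.log a * x) := fun x => by
        rw [Real.rpow_def_of_pos ha0]
      exact (huniv.subset (Set.subset_univ _) (convex_Ici 0)).congr
        (fun x _ => (heq x).symm)
    refine (hconv.neg.add_const 1).congr fun x _ => ?_
    simp [hg]; ring
  have hgnn : ∀ x : ℝ, x ∈ Set.Ici (0 : ℝ) → 0 ≤ g x := by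
    intro x hx
    have : a ^ x ≤ 1 := Real.rpow_le_one ha0.le ha1.le hx
    simp only [hg]; linarith
  refine ⟨convex_Ici 0, fun x hx y hy p q hp hq hpq => ?_⟩
  have hsq := (Real.strictConcaveOn_sqrt.concaveOn).2 (hgnn x hx) (hgnn y hy) hp hq hpq
  have hmid := hgconc.2 hx hy hp hq hpq
  have hnn : 0 ≤ p • g x + q • g y :=
    add_nonneg (smul_nonneg hp (hgnn x hx)) (smul_nonneg hq (hgnn y hy))
  calc p • Real.sqrt (g x) + q • Real.sqrt (g y)
      ≤ Real.sqrt (p • g x + q • g y) := hsq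
    _ ≤ Real.sqrt (g (p • x + q • y)) := Real.sqrt_le_sqrt hmid
end

section
/- Combined trade-off inequality for general (variable-round) verification protocols (the key inequality in the proof of Theorem 4.3): Let ρ, φ be density matrices on ℂ^d, let λ be a real number with 0 ≤ λ ≤ 2, let S be a finite set of positive natural numbers, let p : S → ℝ be nonnegative weights with ∑_{i∈S} p_i = 1, and for each i ∈ S let M_i be a Hermitian matrix on (ℂ^d)^{⊗i} with 0 ≤ M_i ≤ I in the Loewner order. Then (λ/2)·∑_{i∈S} p_i·Tr(M_i·ρ^{⊗i}) + (1 − ∑_{i∈S} p_i·Tr(M_i·φ^{⊗i})) ≥ (λ/2)·(1 − ∑_{i∈S} p_i·(1/2)·‖ρ^{⊗i} − φ^{⊗i}‖₁). -/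
open Matrix BigOperators
open scoped ComplexOrder

lemma tensorPow_conjTranspose {d : ℕ} (A : Matrix (Fin d) (Fin d) ℂ) (n : ℕ) :
    (tensorPow A n)ᴴ = tensorPow Aᴴ n := by
  ext i j
  simp [tensorPow, conjTranspose_apply, star_prod]

lemma tensorPow_mul {d : ℕ} (A B : Matrix (Fin d) (Fin d) ℂ) (n : ℕ) :
    tensorPow (A * B) n = tensorPow A n * tensorPow B n := by
  ext i j
  simp only [tensorPow, Matrix.mul_apply, Matrix.of_apply]
  rw [Finset.prod_univ_sum]
  rw [Fintype.piFinset_univ]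
  exact Finset.sum_congr rfl fun g _ => by rw [Finset.prod_mul_distrib]

lemma tensorPow_posSemidef {d : ℕ} {A : Matrix (Fin d) (Fin d) ℂ} (hA : A.PosSemidef)
    (n : ℕ) : (tensorPow A n).PosSemidef := by
  obtain ⟨B, rfl⟩ : ∃ B : Matrix _ _ ℂ, A = Bᴴ * B := by
    open scoped MatrixOrder in exact CStarAlgebra.nonneg_iff_eq_star_mul_self.mp hA.nonneg
  rw [tensorPow_mul, ← tensorPow_conjTranspose]
  exact Matrix.posSemidef_conjTranspose_mul_self _

lemma tensorPow_trace {d : ℕ} (A : Matrix (Fin d) (Fin d) ℂ) (n : ℕ) :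
    (tensorPow A n).trace = A.trace ^ n := by
  simp only [Matrix.trace, Matrix.diag, tensorPow, Matrix.of_apply]
  rw [← Fintype.piFinset_univ,
    show ((∑ x : Fin d, A x x) ^ n) = ∏ _k : Fin n, ∑ x : Fin d, A x x by
      simp [Finset.prod_const]]
  exact (Finset.prod_univ_sum (fun _ => Finset.univ) (fun _ j => A j j)).symm

section Herm
variable {n : Type*} [Fintype n] [DecidableEq n]

lemma psd_diag_nonneg {A : Matrix n n ℂ} (hA : A.PosSemidef) (j : n) : 0 ≤ A j j := by
  exact hA.diag_nonneg

lemma herm_trace_eigen {Δ : Matrix n n ℂ} (hΔ : Δ.IsHermitian) :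
    Δ.trace = ∑ j, (hΔ.eigenvalues j : ℂ) := by
  have hU : star (hΔ.eigenvectorUnitary : Matrix n n ℂ) * (hΔ.eigenvectorUnitary : Matrix n n ℂ)
      = 1 := Matrix.mem_unitaryGroup_iff'.mp (hΔ.eigenvectorUnitary).2
  conv_lhs => rw [hΔ.spectral_theorem, Unitary.conjStarAlgAut_apply]
  rw [Matrix.trace_mul_cycle, hU, Matrix.one_mul, Matrix.trace_diagonal]
  simp

lemma traceNorm_hermitian {Δ : Matrix n n ℂ} (hΔ : Δ.IsHermitian) :
    traceNorm Δ = ∑ j, |hΔ.eigenvalues j| := by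
  set U : Matrix n n ℂ := (hΔ.eigenvectorUnitary : Matrix n n ℂ) with hUdef
  have hU : star U * U = 1 := Matrix.mem_unitaryGroup_iff'.mp (hΔ.eigenvectorUnitary).2
  set P : Matrix n n ℂ :=
    U * Matrix.diagonal (fun j => ((|hΔ.eigenvalues j| : ℝ) : ℂ)) * star U with hPdef
  have hdiag : (Matrix.diagonal (fun j => ((|hΔ.eigenvalues j| : ℝ) : ℂ))).PosSemidef :=
    Matrix.posSemidef_diagonal_iff.mpr fun j => Complex.zero_le_real.mpr (abs_nonneg _)
  have hP : P.PosSemidef := by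
    have := hdiag.mul_mul_conjTranspose_same U
    rwa [← Matrix.star_eq_conjTranspose] at this
  have key : ∀ f g : n → ℂ,
      (U * Matrix.diagonal f * star U) * (U * Matrix.diagonal g * star U)
        = U * Matrix.diagonal (fun j => f j * g j) * star U := by
    intro f g
    calc (U * Matrix.diagonal f * star U) * (U * Matrix.diagonal g * star U)
        = U * (Matrix.diagonal f * ((star U * U) * (Matrix.diagonal g * star U))) := by
          simp only [Matrix.mul_assoc]
      _ = U * Matrix.diagonal (fun j => f j * g j) * star U := by
          rw [hU, Matrix.one_mul]
          simp only [← Matrix.mul_assoc, Matrix.diagonal_mul_diagonal]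
  have h2 : (Δᴴ * Δ).PosSemidef := Matrix.posSemidef_conjTranspose_mul_self Δ
  have hsq : P ^ 2 = Δᴴ * Δ := by
    rw [pow_two, hPdef, key, hΔ.eq]
    conv_rhs => rw [hΔ.spectral_theorem, Unitary.conjStarAlgAut_apply]
    rw [key]
    have : (fun j => ((|hΔ.eigenvalues j| : ℝ) : ℂ) * ((|hΔ.eigenvalues j| : ℝ) : ℂ))
        = fun j => ((RCLike.ofReal ∘ hΔ.eigenvalues) j) * ((RCLike.ofReal ∘ hΔ.eigenvalues) j) := by
      funext j
      simp only [Function.comp, RCLike.ofReal_alg, Complex.real_smul, Complex.ofReal_one, mul_one]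
      norm_cast
      exact abs_mul_abs_self _
    rw [this]
  have hm : msqrt (Δᴴ * Δ) = P := by
    rw [msqrt, dif_pos h2]
    have e1 : (h2.1.eigenvectorUnitary : Matrix n n ℂ) *
        diagonal ((↑) ∘ (√·) ∘ h2.1.eigenvalues) *
        (star h2.1.eigenvectorUnitary : Matrix n n ℂ) = cfc Real.sqrt (Δᴴ * Δ) := by
      rw [h2.1.cfc_eq]; rfl
    have e2 : P = cfc (fun x : ℝ => |x|) Δ := by
      rw [hΔ.cfc_eq]; rfl
    have hsa : IsSelfAdjoint Δ := hΔ
    rw [e1, e2, hΔ.eq]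
    rw [show Δ * Δ = cfc (fun x : ℝ => x * x) Δ by rw [cfc_mul .., cfc_id' ..]]
    rw [← cfc_comp' Real.sqrt (fun x : ℝ => x * x) Δ]
    exact cfc_congr fun x _ => Real.sqrt_mul_self_eq_abs x
  rw [traceNorm, hm, hPdef, Matrix.trace_mul_cycle, hU, Matrix.one_mul, Matrix.trace_diagonal]
  rw [Complex.re_sum]
  simp

lemma effect_trace_lower {M Δ : Matrix n n ℂ} (hM : M.PosSemidef) (hM' : (1 - M).PosSemidef)
    (hΔ : Δ.IsHermitian) (hΔt : Δ.trace = 0) :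
    -(1 / 2 * traceNorm Δ) ≤ ((M * Δ).trace).re := by
  set U : Matrix n n ℂ := (hΔ.eigenvectorUnitary : Matrix n n ℂ) with hUdef
  have hU : star U * U = 1 := Matrix.mem_unitaryGroup_iff'.mp (hΔ.eigenvectorUnitary).2
  set N : Matrix n n ℂ := star U * M * U with hNdef
  set lam : n → ℝ := hΔ.eigenvalues with hlamdef
  have hNpsd : N.PosSemidef := by
    have := hM.conjTranspose_mul_mul_same U
    rwa [← Matrix.star_eq_conjTranspose] at this
  have hN'psd : (1 - N).PosSemidef := by
    have h1 := hM'.conjTranspose_mul_mul_same U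
    rw [← Matrix.star_eq_conjTranspose] at h1
    have h2 : star U * (1 - M) * U = 1 - N := by
      rw [Matrix.mul_sub, Matrix.sub_mul, Matrix.mul_one, hU, hNdef]
    rwa [h2] at h1
  have hTr : (M * Δ).trace = ∑ j, N j j * (lam j : ℂ) := by
    conv_lhs => rw [hΔ.spectral_theorem, Unitary.conjStarAlgAut_apply]
    rw [← Matrix.mul_assoc, ← Matrix.mul_assoc, Matrix.trace_mul_cycle, ← Matrix.mul_assoc]
    have h3 : star U * (M * U) = N := by rw [hNdef, Matrix.mul_assoc]
    rw [Matrix.mul_assoc (star U) M U, h3]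
    simp [Matrix.trace, Matrix.diag, Matrix.mul_diagonal, hlamdef]
  have hlb : ∀ j, 0 ≤ (N j j).re := fun j => by
    simpa using (Complex.le_def.mp (psd_diag_nonneg hNpsd j)).1
  have hub : ∀ j, (N j j).re ≤ 1 := by
    intro j
    have h := (Complex.le_def.mp (psd_diag_nonneg hN'psd j)).1
    simp only [Matrix.sub_apply, Matrix.one_apply_eq, Complex.sub_re, Complex.one_re,
      Complex.zero_re] at h
    linarith
  have hsum0 : ∑ j, lam j = 0 := by
    have h1 := (herm_trace_eigen hΔ).symm.trans hΔt
    have h2 : ((∑ j, lam j : ℝ) : ℂ) = 0 := by push_cast; exact h1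
    exact_mod_cast h2
  have hre : ((M * Δ).trace).re = ∑ j, (N j j).re * lam j := by
    rw [hTr, Complex.re_sum]
    exact Finset.sum_congr rfl fun j _ => by simp [Complex.mul_re]
  rw [hre, traceNorm_hermitian hΔ]
  have hterm : ∀ j, (lam j - |lam j|) / 2 ≤ (N j j).re * lam j := by
    intro j
    rcases le_or_gt 0 (lam j) with h | h
    · rw [abs_of_nonneg h]
      simpa using mul_nonneg (hlb j) h
    · rw [abs_of_neg h]
      nlinarith [hub j, hlb j]
  calc -(1 / 2 * ∑ j, |lam j|) = ∑ j, (lam j - |lam j|) / 2 := by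
        rw [← Finset.sum_div, Finset.sum_sub_distrib, hsum0]
        ring
    _ ≤ ∑ j, (N j j).re * lam j := Finset.sum_le_sum fun j _ => hterm j

lemma trace_mul_psd_re_nonneg {A B : Matrix n n ℂ} (hA : A.PosSemidef) (hB : B.PosSemidef) :
    0 ≤ ((A * B).trace).re := by
  obtain ⟨C, rfl⟩ : ∃ C : Matrix _ _ ℂ, B = Cᴴ * C := by
    open scoped MatrixOrder in exact CStarAlgebra.nonneg_iff_eq_star_mul_self.mp hB.nonneg
  have h1 : (C * A * Cᴴ).PosSemidef := hA.mul_mul_conjTranspose_same C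
  have h2 : (A * (Cᴴ * C)).trace = (C * A * Cᴴ).trace := by
    rw [← Matrix.mul_assoc, Matrix.trace_mul_cycle]
  rw [h2, Matrix.trace, Complex.re_sum]
  exact Finset.sum_nonneg fun j _ => by
    simpa using (Complex.le_def.mp (psd_diag_nonneg h1 j)).1

end Herm

/-- Combined trade-off inequality for general (variable-round) verification protocols. -/
theorem general_protocol_tradeoff {d : ℕ}
    (ρ φ : Matrix (Fin d) (Fin d) ℂ)
    (hρ : ρ.PosSemidef) (hρt : ρ.trace = 1)
    (hφ : φ.PosSemidef) (hφt : φ.trace = 1)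
    (lam : ℝ) (hlam0 : 0 ≤ lam) (hlam2 : lam ≤ 2)
    (S : Finset ℕ) (hS : ∀ i ∈ S, 0 < i)
    (p : ℕ → ℝ) (hp : ∀ i ∈ S, 0 ≤ p i) (hpsum : ∑ i ∈ S, p i = 1)
    (M : (i : ℕ) → Matrix (Fin i → Fin d) (Fin i → Fin d) ℂ)
    (hM : ∀ i ∈ S, (M i).PosSemidef) (hM' : ∀ i ∈ S, (1 - M i).PosSemidef) :
    (lam / 2) * ∑ i ∈ S, p i * ((M i * tensorPow ρ i).trace).re +
        (1 - ∑ i ∈ S, p i * ((M i * tensorPow φ i).trace).re) ≥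
      (lam / 2) *
        (1 - ∑ i ∈ S, p i * ((1 / 2) * traceNorm (tensorPow ρ i - tensorPow φ i))) := by
  have key : ∀ i ∈ S,
      ((M i * tensorPow φ i).trace).re
        - 1 / 2 * traceNorm (tensorPow ρ i - tensorPow φ i)
        ≤ ((M i * tensorPow ρ i).trace).re := by
    intro i hi
    have hAi := tensorPow_posSemidef hρ i
    have hBi := tensorPow_posSemidef hφ i
    have htA : (tensorPow ρ i).trace = 1 := by rw [tensorPow_trace, hρt, one_pow]
    have htB : (tensorPow φ i).trace = 1 := by rw [tensorPow_trace, hφt, one_pow]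
    have hΔh : (tensorPow ρ i - tensorPow φ i).IsHermitian := hAi.1.sub hBi.1
    have hΔt : (tensorPow ρ i - tensorPow φ i).trace = 0 := by
      rw [Matrix.trace_sub, htA, htB, sub_self]
    have h := effect_trace_lower (hM i hi) (hM' i hi) hΔh hΔt
    rw [Matrix.mul_sub, Matrix.trace_sub, Complex.sub_re] at h
    linarith
  have hble : ∀ i ∈ S, ((M i * tensorPow φ i).trace).re ≤ 1 := by
    intro i hi
    have hBi := tensorPow_posSemidef hφ i
    have htB : (tensorPow φ i).trace = 1 := by rw [tensorPow_trace, hφt, one_pow]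
    have h := trace_mul_psd_re_nonneg (hM' i hi) hBi
    rw [Matrix.sub_mul, Matrix.one_mul, Matrix.trace_sub, Complex.sub_re, htB] at h
    simp only [Complex.one_re] at h
    linarith
  set A := ∑ i ∈ S, p i * ((M i * tensorPow ρ i).trace).re with hA
  set B := ∑ i ∈ S, p i * ((M i * tensorPow φ i).trace).re with hB
  set C := ∑ i ∈ S, p i * ((1 / 2) * traceNorm (tensorPow ρ i - tensorPow φ i)) with hC
  have hABC : B - C ≤ A := by
    rw [hA, hB, hC, ← Finset.sum_sub_distrib]
    refine Finset.sum_le_sum fun i hi => ?_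
    rw [← mul_sub]
    exact mul_le_mul_of_nonneg_left (by linarith [key i hi]) (hp i hi)
  have hB1 : B ≤ 1 := by
    rw [hB, ← hpsum]
    exact Finset.sum_le_sum fun i hi => by
      have := hble i hi
      nlinarith [hp i hi]
  nlinarith [mul_nonneg (by linarith : (0:ℝ) ≤ lam / 2) (by linarith : 0 ≤ A - (B - C)),
    mul_nonneg (by linarith : (0:ℝ) ≤ 1 - lam / 2) (by linarith : 0 ≤ 1 - B)]
end
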